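/- arXiv:1307.6373 — 2 statements merged into one kernel-verified Lean document; each statement's English description precedes it below -/
import Mathlib

section
/- For α > 2, the double integral ∫₀^∞ ∫₀^1 [t^{-2/α}/(1+ts)²] · [1/(1+t(1-s))] ds dt is strictly less than π·csc(2π/α). -/
open Real MeasureTheory


lemma complex_eq_real_beta (p : ℝ) (x : ℝ) (hx : x ∈ Set.Icc (0:ℝ) 1) :
    (x : ℂ) ^ ((p:ℂ) - 1) * (1 - (x:ℂ)) ^ (((1-p:ℝ):ℂ) - 1)
      = ((x ^ (p-1) * (1-x) ^ (-p) : ℝ) : ℂ) := by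
  obtain ⟨h0, h1⟩ := hx
  rw [Complex.ofReal_mul, Complex.ofReal_cpow h0, Complex.ofReal_cpow (by linarith)]
  push_cast
  ring_nf

lemma real_beta_eq (p : ℝ) (hp0 : 0 < p) (hp1 : p < 1) :
    ∫ x in (0:ℝ)..1, x ^ (p-1) * (1-x) ^ (-p) = π / Real.sin (π * p) := by
  have h1p : (0:ℝ) < 1 - p := by linarith
  have key := Complex.Gamma_mul_Gamma_eq_betaIntegral (s := (p:ℂ)) (t := ((1-p:ℝ):ℂ))
    (by simpa using hp0) (by simpa using h1p)
  have hsum : (p:ℂ) + ((1-p:ℝ):ℂ) = 1 := by push_cast; ring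
  rw [hsum, Complex.Gamma_one, one_mul] at key
  have hbeta : Complex.betaIntegral (p:ℂ) ((1-p:ℝ):ℂ)
      = ((∫ x in (0:ℝ)..1, x ^ (p-1) * (1-x) ^ (-p) : ℝ) : ℂ) := by
    rw [Complex.betaIntegral, ← intervalIntegral.integral_ofReal]
    apply intervalIntegral.integral_congr
    intro x hx
    rw [Set.uIcc_of_le (by norm_num : (0:ℝ) ≤ 1)] at hx
    exact complex_eq_real_beta p x hx
  rw [hbeta, Complex.Gamma_ofReal, Complex.Gamma_ofReal, ← Complex.ofReal_mul] at key
  have := Complex.ofReal_injective key.symm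
  rw [this, Real.Gamma_mul_Gamma_one_sub]

section CoV
variable (p : ℝ)

lemma cov_deriv : ∀ x ∈ Set.Ioo (0:ℝ) 1,
    HasDerivWithinAt (fun x : ℝ => x / (1 - x)) (1 / (1-x)^2) (Set.Ioo 0 1) x := by
  intro x hx
  have hne : (1:ℝ) - x ≠ 0 := by nlinarith [hx.2]
  have h := (hasDerivAt_id x).div ((hasDerivAt_id x).const_sub 1) hne
  convert h.hasDerivWithinAt using 1
  · rfl
  · rfl
  · rfl
  · simp only [id]
    ring

lemma cov_inj : Set.InjOn (fun x : ℝ => x / (1 - x)) (Set.Ioo 0 1) := by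
  intro a ha b hb h
  have h1 : (1:ℝ) - a ≠ 0 := by nlinarith [ha.2]
  have h2 : (1:ℝ) - b ≠ 0 := by nlinarith [hb.2]
  field_simp at h
  linarith

lemma cov_img : (fun x : ℝ => x / (1 - x)) '' Set.Ioo 0 1 = Set.Ioi 0 := by
  ext t
  constructor
  · rintro ⟨x, hx, rfl⟩
    exact div_pos hx.1 (by linarith [hx.2])
  · intro ht
    have ht' : (0:ℝ) < t := ht
    refine ⟨t / (1 + t), ⟨div_pos ht' (by linarith), (div_lt_one (by linarith)).2 (by linarith)⟩, ?_⟩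
    have h1 : (1:ℝ) + t ≠ 0 := by linarith
    field_simp
    ring

lemma beta_integrand_integrable (hp0 : 0 < p) (hp1 : p < 1) :
    IntegrableOn (fun x : ℝ => x ^ (p-1) * (1-x) ^ (-p)) (Set.Ioo 0 1) := by
  have h1p : (0:ℝ) < 1 - p := by linarith
  have h := (Complex.betaIntegral_convergent (u := (p:ℂ)) (v := ((1-p:ℝ):ℂ))
    (by simpa using hp0) (by simpa using h1p)).1
  have h' : IntegrableOn (fun x : ℝ =>
      ‖(x : ℂ) ^ ((p:ℂ) - 1) * (1 - (x:ℂ)) ^ (((1-p:ℝ):ℂ) - 1)‖) (Set.Ioo 0 1) := by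
    have h2 : IntegrableOn (fun x : ℝ =>
        ‖(x : ℂ) ^ ((p:ℂ) - 1) * (1 - (x:ℂ)) ^ (((1-p:ℝ):ℂ) - 1)‖) (Set.Ioc 0 1) := h.norm
    exact h2.mono_set Set.Ioo_subset_Ioc_self
  refine h'.congr_fun ?_ measurableSet_Ioo
  intro x hx
  have hx' : x ∈ Set.Icc (0:ℝ) 1 := ⟨hx.1.le, hx.2.le⟩
  simp only [complex_eq_real_beta p x hx', Complex.norm_real, Real.norm_eq_abs]
  rw [abs_of_nonneg]
  exact mul_nonneg (Real.rpow_nonneg hx.1.le _) (Real.rpow_nonneg (by linarith [hx.2]) _)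

lemma cov_integrand (c : ℝ) (hc0 : 0 < c) : ∀ x ∈ Set.Ioo (0:ℝ) 1,
    |1 / (1-x)^2| • ((x / (1 - x)) ^ (-c) / (1 + x / (1 - x)))
      = x ^ ((1-c)-1) * (1-x) ^ (-(1-c)) := by
  intro x hx
  have h0 : (0:ℝ) < x := hx.1
  have h1 : (0:ℝ) < 1 - x := by linarith [hx.2]
  have e1 : (1:ℝ) + x / (1 - x) = 1 / (1 - x) := by field_simp; ring
  have e2 : (x / (1 - x)) ^ (-c) = x ^ (-c) / (1-x) ^ (-c) :=
    Real.div_rpow h0.le h1.le _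
  have e3 : (1-x) ^ (-c) = ((1-x) ^ c)⁻¹ := Real.rpow_neg h1.le _
  have e4 : x ^ ((1-c)-1) = x ^ (-c) := by ring_nf
  have e5 : (1-x) ^ (-(1-c)) = (1-x) ^ c / (1-x) := by
    rw [show -(1-c) = c - 1 by ring, Real.rpow_sub h1, Real.rpow_one]
  rw [smul_eq_mul, e1, e2, e3, e4, e5, abs_of_pos (by positivity)]
  have hb : (1-x) ^ c ≠ 0 := by positivity
  field_simp

lemma g_value (c : ℝ) (hc0 : 0 < c) (hc1 : c < 1) :
    ∫ t in Set.Ioi (0:ℝ), t ^ (-c) / (1 + t) = π / Real.sin (π * c) := by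
  have := integral_image_eq_integral_abs_deriv_smul measurableSet_Ioo cov_deriv cov_inj
    (fun t : ℝ => t ^ (-c) / (1 + t))
  rw [cov_img] at this
  rw [this, setIntegral_congr_fun measurableSet_Ioo (cov_integrand c hc0),
    ← MeasureTheory.integral_Ioc_eq_integral_Ioo,
    ← intervalIntegral.integral_of_le (by norm_num : (0:ℝ) ≤ 1),
    real_beta_eq (1-c) (by linarith) (by linarith),
    show π * (1 - c) = π - π * c by ring, Real.sin_pi_sub]

lemma g_integrable (c : ℝ) (hc0 : 0 < c) (hc1 : c < 1) :
    IntegrableOn (fun t : ℝ => t ^ (-c) / (1 + t)) (Set.Ioi 0) := by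
  have h := (integrableOn_image_iff_integrableOn_abs_deriv_smul measurableSet_Ioo
    cov_deriv cov_inj (fun t : ℝ => t ^ (-c) / (1 + t)))
  rw [cov_img] at h
  rw [h]
  exact (beta_integrand_integrable (1-c) (by linarith) (by linarith)).congr_fun
    (fun x hx => (cov_integrand c hc0 x hx).symm) measurableSet_Ioo

noncomputable def Gb (c t : ℝ) : ℝ :=
  t ^ (-c) * ((1/2) * (1/(1+t)) + (1/2) * (1/((1+t/2)*(1+t))))

lemma inner_cont (c t : ℝ) (ht : 0 < t) :
    ContinuousOn (fun s : ℝ => t ^ (-c) / (1 + t*s)^2 * (1 / (1 + t*(1-s)))) (Set.Icc 0 1) := by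
  have c1 : ContinuousOn (fun s : ℝ => (1 + t*s)^2) (Set.Icc 0 1) := by fun_prop
  have c2 : ContinuousOn (fun s : ℝ => 1 + t*(1-s)) (Set.Icc 0 1) := by fun_prop
  refine (continuousOn_const.div c1 ?_).mul (continuousOn_const.div c2 ?_)
  · intro s hs
    have : (0:ℝ) < 1 + t*s := by nlinarith [hs.1]
    positivity
  · intro s hs
    have h2 : (0:ℝ) < 1 + t*(1-s) := by nlinarith [hs.2]
    exact ne_of_gt h2

lemma F_nonneg (c t : ℝ) (ht : 0 < t) :
    0 ≤ ∫ s in (0:ℝ)..1, t ^ (-c) / (1 + t*s)^2 * (1 / (1 + t*(1-s))) := by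
  apply intervalIntegral.integral_nonneg (by norm_num)
  intro s hs
  have h2 : (0:ℝ) ≤ 1 + t*(1-s) := by nlinarith [hs.2]
  exact mul_nonneg (div_nonneg (Real.rpow_nonneg ht.le _) (sq_nonneg _))
    (div_nonneg zero_le_one h2)

lemma F_le_G (c t : ℝ) (ht : 0 < t) :
    (∫ s in (0:ℝ)..1, t ^ (-c) / (1 + t*s)^2 * (1 / (1 + t*(1-s)))) ≤ Gb c t := by
  have hcont := inner_cont c t ht
  have hsub1 : Set.uIcc (0:ℝ) (1/2) ⊆ Set.Icc 0 1 := by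
    rw [Set.uIcc_of_le (by norm_num)]
    exact Set.Icc_subset_Icc le_rfl (by norm_num)
  have hsub2 : Set.uIcc (1/2:ℝ) 1 ⊆ Set.Icc 0 1 := by
    rw [Set.uIcc_of_le (by norm_num)]
    exact Set.Icc_subset_Icc (by norm_num) le_rfl
  have hi1 : IntervalIntegrable (fun s : ℝ => t ^ (-c) / (1 + t*s)^2 * (1 / (1 + t*(1-s))))
      volume 0 (1/2) := (hcont.mono hsub1).intervalIntegrable
  have hi2 : IntervalIntegrable (fun s : ℝ => t ^ (-c) / (1 + t*s)^2 * (1 / (1 + t*(1-s))))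
      volume (1/2) 1 := (hcont.mono hsub2).intervalIntegrable
  have hsplit := intervalIntegral.integral_add_adjacent_intervals hi1 hi2
  have hrp : (0:ℝ) ≤ t ^ (-c) := Real.rpow_nonneg ht.le _
  have hb1 : (∫ s in (0:ℝ)..(1/2), t ^ (-c) / (1 + t*s)^2 * (1 / (1 + t*(1-s))))
      ≤ (1/2) * (t ^ (-c) * (1/(1+t))) := by
    have hmono := intervalIntegral.integral_mono_on (by norm_num : (0:ℝ) ≤ 1/2) hi1
      (intervalIntegrable_const (μ := volume) (c := t ^ (-c) * (1/(1+t)))) ?_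
    · calc _ ≤ _ := hmono
        _ = (1/2) * (t ^ (-c) * (1/(1+t))) := by
          rw [intervalIntegral.integral_const, smul_eq_mul]; norm_num
    · intro s hs
      have hs0 : (0:ℝ) ≤ s := hs.1
      have hs1 : s ≤ 1 := le_trans hs.2 (by norm_num)
      have h1s : (0:ℝ) ≤ 1 - s := by linarith
      have hq : 1/((1+t*s)^2) * (1/(1+t*(1-s))) ≤ 1/(1+t) := by
        rw [div_mul_div_comm, one_mul]
        apply one_div_le_one_div_of_le (by linarith)
        nlinarith [mul_nonneg ht.le hs0, mul_nonneg ht.le h1s,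
          mul_nonneg (mul_nonneg ht.le hs0) (mul_nonneg ht.le h1s),
          sq_nonneg (t*s), mul_nonneg (mul_nonneg (mul_nonneg ht.le hs0) (mul_nonneg ht.le hs0)) (mul_nonneg ht.le h1s)]
      calc t ^ (-c) / (1 + t*s)^2 * (1 / (1 + t*(1-s)))
          = t ^ (-c) * (1/((1+t*s)^2) * (1/(1+t*(1-s)))) := by ring
        _ ≤ t ^ (-c) * (1/(1+t)) := mul_le_mul_of_nonneg_left hq hrp
  have hb2 : (∫ s in (1/2:ℝ)..1, t ^ (-c) / (1 + t*s)^2 * (1 / (1 + t*(1-s))))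
      ≤ (1/2) * (t ^ (-c) * (1/((1+t/2)*(1+t)))) := by
    have hmono := intervalIntegral.integral_mono_on (by norm_num : (1/2:ℝ) ≤ 1) hi2
      (intervalIntegrable_const (μ := volume) (c := t ^ (-c) * (1/((1+t/2)*(1+t))))) ?_
    · calc _ ≤ _ := hmono
        _ = (1/2) * (t ^ (-c) * (1/((1+t/2)*(1+t)))) := by
          rw [intervalIntegral.integral_const, smul_eq_mul]; norm_num
    · intro s hs
      have hshalf : (1/2:ℝ) ≤ s := hs.1
      have hs0 : (0:ℝ) ≤ s := le_trans (by norm_num) hshalf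
      have hs1 : s ≤ 1 := hs.2
      have h1s : (0:ℝ) ≤ 1 - s := by linarith
      have hh1 : (1:ℝ) + t/2 ≤ 1 + t*s := by nlinarith [mul_nonneg ht.le (by linarith : (0:ℝ) ≤ s - 1/2)]
      have hprod : (1:ℝ) + t ≤ (1+t*s)*(1+t*(1-s)) := by
        nlinarith [mul_nonneg (mul_nonneg ht.le hs0) (mul_nonneg ht.le h1s)]
      have hkey : (1+t/2)*(1+t) ≤ (1+t*s)^2*(1+t*(1-s)) := by
        calc (1+t/2)*(1+t) ≤ (1+t*s)*((1+t*s)*(1+t*(1-s))) :=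
              mul_le_mul hh1 hprod (by linarith) (by nlinarith [mul_nonneg ht.le hs0])
          _ = (1+t*s)^2*(1+t*(1-s)) := by ring
      have hq : 1/((1+t*s)^2) * (1/(1+t*(1-s))) ≤ 1/((1+t/2)*(1+t)) := by
        rw [div_mul_div_comm, one_mul]
        apply one_div_le_one_div_of_le (by nlinarith) hkey
      calc t ^ (-c) / (1 + t*s)^2 * (1 / (1 + t*(1-s)))
          = t ^ (-c) * (1/((1+t*s)^2) * (1/(1+t*(1-s)))) := by ring
        _ ≤ t ^ (-c) * (1/((1+t/2)*(1+t))) := mul_le_mul_of_nonneg_left hq hrp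
  calc (∫ s in (0:ℝ)..1, t ^ (-c) / (1 + t*s)^2 * (1 / (1 + t*(1-s))))
      = (∫ s in (0:ℝ)..(1/2), t ^ (-c) / (1 + t*s)^2 * (1 / (1 + t*(1-s))))
        + ∫ s in (1/2:ℝ)..1, t ^ (-c) / (1 + t*s)^2 * (1 / (1 + t*(1-s))) := hsplit.symm
    _ ≤ (1/2) * (t ^ (-c) * (1/(1+t))) + (1/2) * (t ^ (-c) * (1/((1+t/2)*(1+t)))) :=
        add_le_add hb1 hb2
    _ = Gb c t := by rw [Gb]; ring

lemma G_lt_g (c t : ℝ) (ht : 0 < t) : Gb c t < t ^ (-c) / (1 + t) := by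
  have hrp : 0 < t ^ (-c) := Real.rpow_pos_of_pos ht _
  have h1 : 1/((1+t/2)*(1+t)) < 1/(1+t) := by
    apply one_div_lt_one_div_of_lt (by linarith)
    nlinarith
  have : (1/2) * (1/(1+t)) + (1/2) * (1/((1+t/2)*(1+t))) < 1/(1+t) := by linarith
  calc Gb c t < t ^ (-c) * (1/(1+t)) := by
        rw [Gb]; exact mul_lt_mul_of_pos_left this hrp
    _ = t ^ (-c) / (1 + t) := by ring

lemma G_nonneg (c t : ℝ) (ht : 0 < t) : 0 ≤ Gb c t := by
  have hrp : (0:ℝ) ≤ t ^ (-c) := Real.rpow_nonneg ht.le _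
  have h1 : (0:ℝ) < 1 + t := by linarith
  have h2 : (0:ℝ) < 1 + t/2 := by linarith
  rw [Gb]
  positivity

theorem stmt_8 (α : ℝ) (hα : 2 < α) :
    (∫ t in Set.Ioi (0 : ℝ), ∫ s in (0:ℝ)..1,
        t ^ (-(2 / α)) / (1 + t * s) ^ 2 * (1 / (1 + t * (1 - s))))
      < π / Real.sin (2 * π / α) := by
  have hα0 : (0:ℝ) < α := by linarith
  have hc0 : 0 < 2 / α := by positivity
  have hc1 : 2 / α < 1 := by rw [div_lt_one hα0]; linarith
  have hRHS : π / Real.sin (2 * π / α) = π / Real.sin (π * (2 / α)) := by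
    rw [show 2 * π / α = π * (2/α) by ring]
  have hFmeas : AEStronglyMeasurable
      (fun t : ℝ => ∫ s in (0:ℝ)..1, t ^ (-(2/α)) / (1 + t * s) ^ 2 * (1 / (1 + t * (1 - s))))
      (volume.restrict (Set.Ioi 0)) := by
    have hFeq : (fun t : ℝ => ∫ s in (0:ℝ)..1, t ^ (-(2/α)) / (1 + t * s) ^ 2 * (1 / (1 + t * (1 - s))))
        = fun t : ℝ => ∫ s in Set.Ioc (0:ℝ) 1, t ^ (-(2/α)) / (1 + t * s) ^ 2 * (1 / (1 + t * (1 - s))) := by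
      funext t
      exact intervalIntegral.integral_of_le (by norm_num)
    rw [hFeq]
    apply StronglyMeasurable.aestronglyMeasurable
    apply MeasureTheory.StronglyMeasurable.integral_prod_right
      (f := fun (t : ℝ) (s : ℝ) => t ^ (-(2/α)) / (1 + t * s) ^ 2 * (1 / (1 + t * (1 - s))))
    apply Measurable.stronglyMeasurable
    show Measurable fun p : ℝ × ℝ => p.1 ^ (-(2/α)) / (1 + p.1 * p.2) ^ 2 * (1 / (1 + p.1 * (1 - p.2)))
    fun_prop
  have hg_int := g_integrable (2/α) hc0 hc1
  have hGcont : ContinuousOn (Gb (2/α)) (Set.Ioi 0) := by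
    show ContinuousOn (fun t : ℝ => t ^ (-(2/α)) * ((1/2) * (1/(1+t)) + (1/2) * (1/((1+t/2)*(1+t))))) (Set.Ioi 0)
    apply ContinuousOn.mul
    · exact continuousOn_id.rpow_const (fun x hx => Or.inl (ne_of_gt hx))
    · apply ContinuousOn.add
      · apply ContinuousOn.mul continuousOn_const
        apply continuousOn_const.div (by fun_prop)
        intro x hx
        have : (0:ℝ) < x := hx
        intro h; linarith [h]
      · apply ContinuousOn.mul continuousOn_const
        apply continuousOn_const.div (by fun_prop)
        intro x hx
        have hx' : (0:ℝ) < x := hx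
        have : (0:ℝ) < (1+x/2)*(1+x) := by nlinarith
        exact ne_of_gt this
  have hG_int : IntegrableOn (Gb (2/α)) (Set.Ioi 0) := by
    apply Integrable.mono' hg_int (hGcont.aestronglyMeasurable measurableSet_Ioi)
    refine (ae_restrict_iff' measurableSet_Ioi).2 (ae_of_all _ fun t ht => ?_)
    have ht' : (0:ℝ) < t := ht
    rw [Real.norm_eq_abs, abs_of_nonneg (G_nonneg _ t ht')]
    exact (G_lt_g _ t ht').le
  have hF_int : IntegrableOn
      (fun t : ℝ => ∫ s in (0:ℝ)..1, t ^ (-(2/α)) / (1 + t * s) ^ 2 * (1 / (1 + t * (1 - s))))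
      (Set.Ioi 0) := by
    apply Integrable.mono' hg_int hFmeas
    refine (ae_restrict_iff' measurableSet_Ioi).2 (ae_of_all _ fun t ht => ?_)
    have ht' : (0:ℝ) < t := ht
    rw [Real.norm_eq_abs, abs_of_nonneg (F_nonneg _ t ht')]
    exact le_trans (F_le_G _ t ht') (G_lt_g _ t ht').le
  have h1 : (∫ t in Set.Ioi (0:ℝ), ∫ s in (0:ℝ)..1, t ^ (-(2/α)) / (1 + t * s) ^ 2 * (1 / (1 + t * (1 - s))))
      ≤ ∫ t in Set.Ioi (0:ℝ), Gb (2/α) t :=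
    setIntegral_mono_on hF_int hG_int measurableSet_Ioi (fun t ht => F_le_G _ t ht)
  have hdiff : IntegrableOn (fun t : ℝ => t ^ (-(2/α)) / (1 + t) - Gb (2/α) t) (Set.Ioi 0) :=
    hg_int.sub hG_int
  have h2 : 0 < ∫ t in Set.Ioi (0:ℝ), (t ^ (-(2/α)) / (1 + t) - Gb (2/α) t) := by
    rw [setIntegral_pos_iff_support_of_nonneg_ae ?_ hdiff]
    · refine lt_of_lt_of_le ?_ (measure_mono
        (show Set.Ioi (0:ℝ) ⊆ _ ∩ Set.Ioi 0 from
          fun t ht => ⟨ne_of_gt (sub_pos.2 (G_lt_g _ t ht)), ht⟩))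
      simp [Real.volume_Ioi]
    · exact (ae_restrict_iff' measurableSet_Ioi).2
        (ae_of_all _ fun t ht => (sub_pos.2 (G_lt_g _ t ht)).le)
  rw [integral_sub hg_int hG_int] at h2
  rw [hRHS, ← g_value (2/α) hc0 hc1]
  exact lt_of_le_of_lt h1 (by linarith)
end CoV
end

section
/- Let c > 0, α > 2, and F(s) = exp(-c·s^{2/α}). Writing u = c·s^{2/α}, one has ∑_{k=0}^{3} (-1)^k (s^k/k!) F^{(k)}(s) = (e^{-u}/(3α³)) · (3α³ + 11α²u + 12α·u·(u-1) + 4u·(1 - 3u + u²)). -/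
open Real Finset

lemma hd_pow (c β p : ℝ) {x : ℝ} (hx : 0 < x) :
    HasDerivAt (fun x : ℝ => x ^ p * Real.exp (-c * x ^ β))
      ((p * x ^ (p - 1) - c * β * x ^ (p + β - 1)) * Real.exp (-c * x ^ β)) x := by
  have h1 : HasDerivAt (fun x : ℝ => x ^ p) (p * x ^ (p - 1)) x :=
    Real.hasDerivAt_rpow_const (Or.inl hx.ne')
  have h2 : HasDerivAt (fun x : ℝ => x ^ β) (β * x ^ (β - 1)) x :=
    Real.hasDerivAt_rpow_const (Or.inl hx.ne')
  have h3 := ((h2.const_mul (-c)).exp)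
  have h := h1.mul h3
  refine h.congr_deriv ?_
  have hxe : x ^ (p + β - 1) = x ^ p * x ^ (β - 1) := by
    rw [show p + β - 1 = p + (β - 1) by ring, Real.rpow_add hx]
  rw [hxe]; ring

lemma hd_exp (c β : ℝ) {x : ℝ} (hx : 0 < x) :
    HasDerivAt (fun x : ℝ => Real.exp (-c * x ^ β))
      (-(c * β) * (x ^ (β - 1) * Real.exp (-c * x ^ β))) x := by
  have h2 : HasDerivAt (fun x : ℝ => x ^ β) (β * x ^ (β - 1)) x :=
    Real.hasDerivAt_rpow_const (Or.inl hx.ne')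
  have h3 := ((h2.const_mul (-c)).exp)
  convert h3 using 1; ring

theorem stmt_11 (c α : ℝ) (hc : 0 < c) (hα : 2 < α) (s : ℝ) (hs : 0 < s) :
    ∑ k ∈ range 4, (-1 : ℝ) ^ k * s ^ k / (Nat.factorial k) *
        iteratedDeriv k (fun u : ℝ => Real.exp (-c * u ^ (2 / α))) s
      = Real.exp (-(c * s ^ (2 / α))) / (3 * α ^ 3) *
          (3 * α ^ 3 + 11 * α ^ 2 * (c * s ^ (2 / α))
            + 12 * α * (c * s ^ (2 / α)) * (c * s ^ (2 / α) - 1)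
            + 4 * (c * s ^ (2 / α)) * (1 - 3 * (c * s ^ (2 / α)) + (c * s ^ (2 / α)) ^ 2)) := by
  have hα0 : α ≠ 0 := by linarith
  set β : ℝ := 2 / α with hβdef
  set f : ℝ → ℝ := fun u : ℝ => Real.exp (-c * u ^ β) with hf
  set g1 : ℝ → ℝ := fun x : ℝ => -(c * β) * (x ^ (β - 1) * Real.exp (-c * x ^ β)) with hg1
  set g2 : ℝ → ℝ := fun x : ℝ =>
      c ^ 2 * β ^ 2 * (x ^ (2 * β - 2) * Real.exp (-c * x ^ β))
      - c * β * (β - 1) * (x ^ (β - 2) * Real.exp (-c * x ^ β)) with hg2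
  -- deriv f = g1 on Ioi 0
  have h1 : ∀ x ∈ Set.Ioi (0:ℝ), deriv f x = g1 x := fun x hx => (hd_exp c β hx).deriv
  have h2 : ∀ x ∈ Set.Ioi (0:ℝ), deriv g1 x = g2 x := by
    intro x hx
    have h := ((hd_pow c β (β - 1) hx).const_mul (-(c * β))).deriv
    rw [hg1, h]
    simp only [hg2]
    rw [show β - 1 + β - 1 = 2 * β - 2 by ring, show β - 1 - 1 = β - 2 by ring]
    ring
  have h3 : ∀ x ∈ Set.Ioi (0:ℝ), deriv g2 x =
      c ^ 2 * β ^ 2 * ((2 * β - 2) * x ^ (2 * β - 3) - c * β * x ^ (3 * β - 3)) * Real.exp (-c * x ^ β)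
      - c * β * (β - 1) * ((β - 2) * x ^ (β - 3) - c * β * x ^ (2 * β - 3)) * Real.exp (-c * x ^ β) := by
    intro x hx
    have ha := (hd_pow c β (2 * β - 2) hx).const_mul (c ^ 2 * β ^ 2)
    have hb := (hd_pow c β (β - 2) hx).const_mul (c * β * (β - 1))
    have h := (ha.sub hb).deriv
    simp only [Pi.sub_def] at h
    rw [hg2, h]
    rw [show 2 * β - 2 - 1 = 2 * β - 3 by ring, show 2 * β - 2 + β - 1 = 3 * β - 3 by ring,
        show β - 2 - 1 = β - 3 by ring, show β - 2 + β - 1 = 2 * β - 3 by ring]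
    ring
  have hmem : Set.Ioi (0:ℝ) ∈ nhds s := isOpen_Ioi.mem_nhds hs
  have hef : deriv f =ᶠ[nhds s] g1 := Filter.eventuallyEq_of_mem hmem h1
  have hdd : ∀ x ∈ Set.Ioi (0:ℝ), deriv (deriv f) x = g2 x := by
    intro x hx
    have hefx : deriv f =ᶠ[nhds x] g1 :=
      Filter.eventuallyEq_of_mem (isOpen_Ioi.mem_nhds hx) h1
    rw [hefx.deriv_eq, h2 x hx]
  have i0 : iteratedDeriv 0 f s = Real.exp (-c * s ^ β) := by simp [hf]
  have i1 : iteratedDeriv 1 f s = g1 s := by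
    rw [iteratedDeriv_one]; exact h1 s hs
  have i2 : iteratedDeriv 2 f s = g2 s := by
    rw [show (2:ℕ) = 1 + 1 from rfl, iteratedDeriv_succ, iteratedDeriv_one]
    rw [hef.deriv_eq]
    exact h2 s hs
  have i3 : iteratedDeriv 3 f s =
      c ^ 2 * β ^ 2 * ((2 * β - 2) * s ^ (2 * β - 3) - c * β * s ^ (3 * β - 3)) * Real.exp (-c * s ^ β)
      - c * β * (β - 1) * ((β - 2) * s ^ (β - 3) - c * β * s ^ (2 * β - 3)) * Real.exp (-c * s ^ β) := by
    rw [show (3:ℕ) = 2 + 1 from rfl, iteratedDeriv_succ,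
        show iteratedDeriv 2 f = iteratedDeriv (1 + 1) f from rfl, iteratedDeriv_succ, iteratedDeriv_one]
    have heq : deriv (deriv f) =ᶠ[nhds s] g2 := Filter.eventuallyEq_of_mem hmem hdd
    rw [heq.deriv_eq]
    exact h3 s hs
  rw [Finset.sum_range_succ, Finset.sum_range_succ, Finset.sum_range_succ,
      Finset.sum_range_one, i0, i1, i2, i3]
  -- rpow arithmetic
  have e2β : s ^ (2 * β) = (s ^ β) ^ 2 := by
    rw [two_mul, Real.rpow_add hs, sq]
  have e3β : s ^ (3 * β) = (s ^ β) ^ 3 := by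
    rw [show (3:ℝ) * β = β + (β + β) by ring, Real.rpow_add hs, Real.rpow_add hs]; ring
  have es1 : s ^ (1:ℝ) = s := Real.rpow_one s
  have es2 : s ^ (2:ℝ) = s ^ 2 := Real.rpow_two s
  have es3 : s ^ (3:ℝ) = s ^ 3 := by
    rw [show (3:ℝ) = ((3:ℕ):ℝ) by norm_num, Real.rpow_natCast]
  have eb1 : s ^ (β - 1) = s ^ β / s := by rw [Real.rpow_sub hs, es1]
  have eb2 : s ^ (β - 2) = s ^ β / s ^ 2 := by rw [Real.rpow_sub hs, es2]
  have eb3 : s ^ (β - 3) = s ^ β / s ^ 3 := by rw [Real.rpow_sub hs, es3]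
  have e2b2 : s ^ (2 * β - 2) = (s ^ β) ^ 2 / s ^ 2 := by
    rw [Real.rpow_sub hs, es2, e2β]
  have e2b3 : s ^ (2 * β - 3) = (s ^ β) ^ 2 / s ^ 3 := by
    rw [Real.rpow_sub hs, es3, e2β]
  have e3b3 : s ^ (3 * β - 3) = (s ^ β) ^ 3 / s ^ 3 := by
    rw [Real.rpow_sub hs, es3, e3β]
  simp only [hg1, hg2, eb1, eb2, eb3, e2b2, e2b3, e3b3, neg_mul]
  rw [hβdef]
  norm_num [Nat.factorial]
  have hs0 : s ≠ 0 := hs.ne'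
  field_simp
  ring
end
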